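/- arXiv:1205.0056 — 3 statements merged into one kernel-verified Lean document; each statement's English description precedes it below -/
import Mathlib

section
/- Let 0 < β < 1 and 2 ≤ q < ∞. There exists a constant C > 0, depending only on β and q, such that for every continuously differentiable function f : ℂ → ℝ vanishing outside the closed unit disc, (∫_ℂ |f(z)|^q |z|^{2(β−1)} dA(z))^{1/q} ≤ C [ (∫_ℂ |f(z)|² |z|^{2(β−1)} dA(z))^{1/2} + (∫_ℂ ‖∇f(z)‖² dA(z))^{1/2} ], where dA is Lebesgue measure on ℂ ≅ ℝ². -/
open MeasureTheory

open MeasureTheory Set Metric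
open scoped ENNReal NNReal

lemma oneDim_lt_top {c : ℝ} (hc0 : 0 < c) (hc1 : c < 1) :
    (∫⁻ x : ℝ, (Icc (-1:ℝ) 1).indicator (fun x => ENNReal.ofReal (|x| ^ (-c))) x) < ⊤ := by
  set F : ℝ → ℝ≥0∞ := fun x => (Icc (0:ℝ) 1).indicator (fun x => ENNReal.ofReal (|x| ^ (-c))) x
    with hF
  have hmeas : Measurable F := by
    apply Measurable.indicator _ measurableSet_Icc
    exact (measurable_abs.pow measurable_const).ennreal_ofReal
  have hle : ∀ x : ℝ, (Icc (-1:ℝ) 1).indicator (fun x => ENNReal.ofReal (|x| ^ (-c))) x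
      ≤ F x + F (-x) := by
    intro x
    by_cases hx : x ∈ Icc (-1:ℝ) 1
    · rw [indicator_of_mem hx]
      rcases le_total 0 x with h | h
      · refine le_add_of_le_of_nonneg ?_ (zero_le)
        simp only [F]
        rw [indicator_of_mem (show x ∈ Icc (0:ℝ) 1 from ⟨h, hx.2⟩)]
      · refine le_add_of_nonneg_of_le (zero_le) ?_
        simp only [F]
        rw [indicator_of_mem (show -x ∈ Icc (0:ℝ) 1 from ⟨by linarith, by linarith [hx.1]⟩)]
        rw [abs_neg]
    · rw [indicator_of_notMem hx]; exact zero_le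
  have hFint : (∫⁻ x : ℝ, F x) < ⊤ := by
    simp only [F]
    rw [lintegral_indicator measurableSet_Icc]
    have hint : IntegrableOn (fun x : ℝ => |x| ^ (-c)) (Icc (0:ℝ) 1) volume := by
      have h1 : IntegrableOn (fun x : ℝ => x ^ (-c)) (Icc (0:ℝ) 1) volume := by
        rw [← intervalIntegrable_iff_integrableOn_Icc_of_le zero_le_one]
        exact intervalIntegral.intervalIntegrable_rpow' (by linarith)
      exact h1.congr_fun (fun x hx => by rw [abs_of_nonneg hx.1]) measurableSet_Icc
    exact hint.setLIntegral_lt_top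
  calc (∫⁻ x : ℝ, (Icc (-1:ℝ) 1).indicator (fun x => ENNReal.ofReal (|x| ^ (-c))) x)
      ≤ ∫⁻ x : ℝ, (F x + F (-x)) := lintegral_mono hle
    _ = (∫⁻ x : ℝ, F x) + ∫⁻ x : ℝ, F (-x) := lintegral_add_left hmeas _
    _ = (∫⁻ x : ℝ, F x) + ∫⁻ x : ℝ, F x := by
        congr 1
        exact (Measure.measurePreserving_neg volume).lintegral_comp hmeas
    _ < ⊤ := by
        exact ENNReal.add_lt_top.2 ⟨hFint, hFint⟩

lemma weight_lt_top {β : ℝ} (hβ0 : 0 < β) (hβ1 : β < 1) :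
    (∫⁻ z : ℂ, (closedBall (0:ℂ) 1).indicator
      (fun z => ENNReal.ofReal (‖z‖ ^ (β - 2))) z) < ⊤ := by
  set c : ℝ := (2 - β) / 2 with hc
  have hc0 : 0 < c := by rw [hc]; linarith
  have hc1 : c < 1 := by rw [hc]; linarith
  set F₁ : ℝ → ℝ≥0∞ := fun x => (Icc (-1:ℝ) 1).indicator
    (fun x => ENNReal.ofReal (|x| ^ (-c))) x with hF₁
  have hF₁meas : Measurable F₁ := by
    apply Measurable.indicator _ measurableSet_Icc
    exact (measurable_abs.pow measurable_const).ennreal_ofReal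
  -- a.e. bound on ℂ
  have hnull : ∀ u : ℂ → ℝ, Continuous u → (volume {z : ℂ | u z = 0} = 0 →
      True) := fun _ _ _ => trivial
  have hre : volume {z : ℂ | z.re = 0} = 0 := by
    have : {z : ℂ | z.re = 0} = Complex.measurableEquivRealProd ⁻¹' ({0} ×ˢ univ) := by
      ext z; simp [Complex.measurableEquivRealProd_apply, eq_comm]
    rw [this, Complex.volume_preserving_equiv_real_prod.measure_preimage
      (measurableSet_singleton 0 |>.prod MeasurableSet.univ).nullMeasurableSet]
    rw [Measure.volume_eq_prod, Measure.prod_prod]; simp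
  have him : volume {z : ℂ | z.im = 0} = 0 := by
    have : {z : ℂ | z.im = 0} = Complex.measurableEquivRealProd ⁻¹' (univ ×ˢ {0}) := by
      ext z; simp [Complex.measurableEquivRealProd_apply, eq_comm]
    rw [this, Complex.volume_preserving_equiv_real_prod.measure_preimage
      (MeasurableSet.univ.prod (measurableSet_singleton 0)).nullMeasurableSet]
    rw [Measure.volume_eq_prod, Measure.prod_prod]; simp
  have hae : ∀ᵐ z : ℂ, z.re ≠ 0 ∧ z.im ≠ 0 := by
    exact ((ae_iff).2 (by simpa using hre)).and ((ae_iff).2 (by simpa using him))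
  have hbound : ∀ᵐ z : ℂ, (closedBall (0:ℂ) 1).indicator
      (fun z => ENNReal.ofReal (‖z‖ ^ (β - 2))) z ≤ F₁ z.re * F₁ z.im := by
    filter_upwards [hae] with z hz
    by_cases hzball : z ∈ closedBall (0:ℂ) 1
    · rw [indicator_of_mem hzball]
      have hzle : ‖z‖ ≤ 1 := by
        simpa [Complex.dist_eq] using mem_closedBall.1 hzball
      have hre1 : z.re ∈ Icc (-1:ℝ) 1 := by
        rw [mem_Icc, ← abs_le]
        exact (Complex.abs_re_le_norm z).trans hzle
      have him1 : z.im ∈ Icc (-1:ℝ) 1 := by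
        rw [mem_Icc, ← abs_le]
        exact (Complex.abs_im_le_norm z).trans hzle
      rw [hF₁]
      simp only
      rw [indicator_of_mem hre1, indicator_of_mem him1]
      rw [← ENNReal.ofReal_mul (by positivity)]
      apply ENNReal.ofReal_le_ofReal
      rw [← Real.mul_rpow (abs_nonneg _) (abs_nonneg _)]
      have h1 : ‖z‖ ^ (β - 2) = (‖z‖ ^ (2:ℝ)) ^ (-c) := by
        rw [← Real.rpow_mul (norm_nonneg z)]
        congr 1
        rw [hc]; ring
      rw [h1]
      have hxy : 0 < |z.re| * |z.im| := by
        apply mul_pos <;> [exact abs_pos.2 hz.1; exact abs_pos.2 hz.2]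
      apply Real.rpow_le_rpow_of_nonpos hxy _ (by linarith)
      calc |z.re| * |z.im| ≤ ‖z‖ * ‖z‖ := by
            apply mul_le_mul (Complex.abs_re_le_norm z) (Complex.abs_im_le_norm z)
              (abs_nonneg _) (norm_nonneg z)
        _ = ‖z‖ ^ (2:ℝ) := by
            rw [show (2:ℝ) = ((2:ℕ):ℝ) by norm_num, Real.rpow_natCast]; ring
    · rw [indicator_of_notMem hzball]; exact zero_le
  calc (∫⁻ z : ℂ, (closedBall (0:ℂ) 1).indicator
        (fun z => ENNReal.ofReal (‖z‖ ^ (β - 2))) z)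
      ≤ ∫⁻ z : ℂ, F₁ z.re * F₁ z.im := lintegral_mono_ae hbound
    _ = ∫⁻ p : ℝ × ℝ, F₁ p.1 * F₁ p.2 := by
        have h := Complex.volume_preserving_equiv_real_prod.lintegral_comp
          (f := fun p : ℝ × ℝ => F₁ p.1 * F₁ p.2)
          ((hF₁meas.comp measurable_fst).mul (hF₁meas.comp measurable_snd))
        simpa [Complex.measurableEquivRealProd_apply] using h
    _ = (∫⁻ x : ℝ, F₁ x) * ∫⁻ y : ℝ, F₁ y := by
        rw [Measure.volume_eq_prod]
        exact lintegral_prod_mul hF₁meas.aemeasurable hF₁meas.aemeasurable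
    _ < ⊤ := ENNReal.mul_lt_top (oneDim_lt_top hc0 hc1) (oneDim_lt_top hc0 hc1)

/-- Sobolev imbedding for the flat cone metric of angle `2πβ` at `0 ∈ ℂ`: for
`2 ≤ q < ∞` there is `C > 0` such that for every `C¹` function `f` vanishing outside
the closed unit disc,
`(∫ |f|^q |z|^{2(β−1)} dA)^{1/q} ≤ C [(∫ |f|² |z|^{2(β−1)} dA)^{1/2} + (∫ ‖∇f‖² dA)^{1/2}]`. -/
theorem stmt12 (β q : ℝ) (hβ0 : 0 < β) (hβ1 : β < 1) (hq : 2 ≤ q) :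
    ∃ C : ℝ, 0 < C ∧
      ∀ f : ℂ → ℝ, ContDiff ℝ 1 f → (∀ z : ℂ, 1 < ‖z‖ → f z = 0) →
        (∫⁻ z : ℂ, ENNReal.ofReal
            (|f z| ^ q * ‖z‖ ^ (2 * (β - 1)))) ^ (1 / q)
          ≤ ENNReal.ofReal C *
            ((∫⁻ z : ℂ, ENNReal.ofReal
                (|f z| ^ 2 * ‖z‖ ^ (2 * (β - 1)))) ^ ((1 : ℝ) / 2) +
              (∫⁻ z : ℂ, ENNReal.ofReal (‖fderiv ℝ f z‖ ^ 2)) ^ ((1 : ℝ) / 2)) := by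
  have hq0 : (0:ℝ) < q := by linarith
  -- exponents
  set α : ℝ := 2 * (β - 1) with hα
  set s' : ℝ := (2 - β) / β with hs'
  set s : ℝ := (2 - β) / (2 - 2*β) with hs
  have hs'1 : 1 < s' := by
    rw [hs', lt_div_iff₀ hβ0]; linarith
  have hs1 : 1 < s := by
    rw [hs, lt_div_iff₀ (by linarith)]; linarith
  have hs0 : 0 < s := by linarith
  have hconj : s'.HolderConjugate s := by
    rw [Real.holderConjugate_iff]
    constructor
    · exact hs'1
    · rw [hs', hs, inv_div, inv_div]
      rw [div_add_div _ _ (by linarith : (2:ℝ) - β ≠ 0) (by linarith : (2:ℝ) - β ≠ 0)]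
      rw [div_eq_one_iff_eq (by nlinarith : (2-β) * (2-β) ≠ 0)]
      ring
  have hαs : α * s = β - 2 := by
    rw [hα, hs]
    rw [mul_div_assoc', div_eq_iff (by linarith : (2:ℝ) - 2*β ≠ 0)]
    ring
  set r : ℝ := q * s' with hr
  have hr2 : 2 < r := by
    calc (2:ℝ) ≤ q := hq
      _ = q * 1 := by ring
      _ < q * s' := by exact mul_lt_mul_of_pos_left hs'1 hq0
  have hr0 : 0 < r := by linarith
  -- weight constant
  set ψ : ℂ → ℝ≥0∞ := fun z => (closedBall (0:ℂ) 1).indicator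
    (fun z => ENNReal.ofReal (‖z‖ ^ α)) z with hψ
  have hψmeas : Measurable ψ := by
    apply Measurable.indicator _ measurableSet_closedBall
    exact (continuous_norm.measurable.pow measurable_const).ennreal_ofReal
  have hψpow : ∀ z : ℂ, ψ z ^ s = (closedBall (0:ℂ) 1).indicator
      (fun z => ENNReal.ofReal (‖z‖ ^ (β - 2))) z := by
    intro z
    by_cases hz : z ∈ closedBall (0:ℂ) 1
    · rw [hψ]; simp only
      rw [indicator_of_mem hz, indicator_of_mem hz,
        ENNReal.ofReal_rpow_of_nonneg (Real.rpow_nonneg (norm_nonneg z) _) hs0.le,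
        ← Real.rpow_mul (norm_nonneg z), hαs]
    · rw [hψ]; simp only
      rw [indicator_of_notMem hz, indicator_of_notMem hz,
        ENNReal.zero_rpow_of_pos hs0]
  set K : ℝ≥0∞ := (∫⁻ z : ℂ, ψ z ^ s) ^ (1/s) with hK
  have hKlt : K < ⊤ := by
    rw [hK]
    apply ENNReal.rpow_lt_top_of_nonneg (by positivity)
    rw [lintegral_congr hψpow]
    exact (weight_lt_top hβ0 hβ1).ne
  -- Sobolev exponent
  set p₀ : ℝ := 2 * r / (r + 2) with hp₀
  have hp₀1 : 1 < p₀ := by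
    rw [hp₀, lt_div_iff₀ (by linarith)]; linarith
  have hp₀2 : p₀ < 2 := by
    rw [hp₀, div_lt_iff₀ (by linarith)]; linarith
  set p : ℝ≥0 := p₀.toNNReal with hp
  have hpc : (p : ℝ) = p₀ := Real.coe_toNNReal p₀ (by linarith)
  set r' : ℝ≥0 := r.toNNReal with hr'
  have hrc : (r' : ℝ) = r := Real.coe_toNNReal r (by linarith)
  -- the Sobolev constant
  set Csob : ℝ≥0 := eLpNormLESNormFDerivOfLeConst ℝ (volume : Measure ℂ)
    (closedBall (0:ℂ) 1) p r' with hCsob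
  -- measure factor
  set M : ℝ≥0∞ := (volume (closedBall (0:ℂ) 1)) ^ (1/p₀ - 1/2) with hM
  have hMlt : M < ⊤ := by
    rw [hM]
    apply ENNReal.rpow_lt_top_of_nonneg
    · have : 1/(2:ℝ) ≤ 1/p₀ := by
        apply one_div_le_one_div_of_le (by linarith) hp₀2.le
      linarith
    · exact (measure_closedBall_lt_top).ne
  -- full constant
  set D : ℝ≥0∞ := K ^ (1/q) * Csob * M with hD
  have hDlt : D < ⊤ := by
    rw [hD]
    apply ENNReal.mul_lt_top _ hMlt
    apply ENNReal.mul_lt_top _ ENNReal.coe_lt_top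
    exact ENNReal.rpow_lt_top_of_nonneg (by positivity) hKlt.ne
  refine ⟨D.toReal + 1, by positivity, ?_⟩
  intro f hf h0
  -- supports
  have hsupp : Function.support f ⊆ closedBall (0:ℂ) 1 := by
    intro z hz
    rw [mem_closedBall, Complex.dist_eq, sub_zero]
    by_contra h
    exact hz (h0 z (by linarith [not_le.1 h]))
  have hgsupp : Function.support (fderiv ℝ f) ⊆ closedBall (0:ℂ) 1 := by
    intro z hz
    rw [mem_closedBall, Complex.dist_eq, sub_zero]
    by_contra h
    apply hz
    have hopen : IsOpen {w : ℂ | 1 < ‖w‖} :=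
      isOpen_lt continuous_const continuous_norm
    have hev : f =ᶠ[nhds z] (fun _ => (0:ℝ)) := by
      filter_upwards [hopen.mem_nhds (not_le.1 h)] with w hw
      exact h0 w hw
    rw [hev.fderiv_eq, fderiv_fun_const]
    rfl
  have hfm : Measurable f := hf.continuous.measurable
  -- the pointwise product decomposition
  set φ : ℂ → ℝ≥0∞ := fun z => ENNReal.ofReal (|f z| ^ q) with hφ
  have hφmeas : Measurable φ := (hfm.abs.pow measurable_const).ennreal_ofReal
  have hprod : ∀ z : ℂ, ENNReal.ofReal (|f z| ^ q * ‖z‖ ^ α) = (φ * ψ) z := by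
    intro z
    simp only [Pi.mul_apply, hφ, hψ]
    by_cases hz : z ∈ closedBall (0:ℂ) 1
    · rw [indicator_of_mem hz, ← ENNReal.ofReal_mul (Real.rpow_nonneg (abs_nonneg _) _)]
    · have hz1 : 1 < ‖z‖ := by
        rw [mem_closedBall, Complex.dist_eq, sub_zero] at hz
        linarith [not_le.1 hz]
      rw [h0 z hz1]
      simp [Real.zero_rpow (by linarith : q ≠ 0)]
  have hφpow : ∀ z : ℂ, φ z ^ s' = ENNReal.ofReal (|f z| ^ r) := by
    intro z
    rw [hφ]
    simp only
    rw [ENNReal.ofReal_rpow_of_nonneg (Real.rpow_nonneg (abs_nonneg _) _) (by linarith),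
      ← Real.rpow_mul (abs_nonneg _), ← hr]
  -- Hölder
  have hHolder : (∫⁻ z : ℂ, ENNReal.ofReal (|f z| ^ q * ‖z‖ ^ α))
      ≤ (∫⁻ z : ℂ, ENNReal.ofReal (|f z| ^ r)) ^ (1/s') * K := by
    rw [lintegral_congr hprod]
    calc ∫⁻ z : ℂ, (φ * ψ) z
        ≤ (∫⁻ z : ℂ, φ z ^ s') ^ (1/s') * (∫⁻ z : ℂ, ψ z ^ s) ^ (1/s) :=
          ENNReal.lintegral_mul_le_Lp_mul_Lq volume hconj hφmeas.aemeasurable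
            hψmeas.aemeasurable
      _ = (∫⁻ z : ℂ, ENNReal.ofReal (|f z| ^ r)) ^ (1/s') * K := by
          rw [hK, lintegral_congr hφpow]
  -- eLpNorm identification for f
  have hfnorm : (∫⁻ z : ℂ, ENNReal.ofReal (|f z| ^ r)) ^ (1/r)
      = eLpNorm f r' volume := by
    have hr'0 : r' ≠ 0 := (Real.toNNReal_pos.2 hr0).ne'
    rw [eLpNorm_eq_lintegral_rpow_enorm_toReal (ENNReal.coe_ne_zero.2 hr'0) ENNReal.coe_ne_top]
    rw [ENNReal.coe_toReal, hrc]
    congr 1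
    apply lintegral_congr
    intro z
    rw [Real.enorm_eq_ofReal_abs,
      ENNReal.ofReal_rpow_of_nonneg (abs_nonneg _) hr0.le]
  -- Sobolev inequality
  have hsob : eLpNorm f r' volume ≤ Csob * eLpNorm (fderiv ℝ f) p volume := by
    have hp1 : 1 ≤ p := by
      rw [← NNReal.coe_le_coe, hpc, NNReal.coe_one]; linarith
    have h2p : p < (Module.finrank ℝ ℂ : ℝ≥0) := by
      rw [Complex.finrank_real_complex, ← NNReal.coe_lt_coe, hpc]
      norm_num; linarith
    have hpq : (p:ℝ)⁻¹ - ((Module.finrank ℝ ℂ : ℝ))⁻¹ ≤ ((r' : ℝ))⁻¹ := by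
      rw [Complex.finrank_real_complex, hpc, hrc]
      have h1 : p₀⁻¹ = 1/2 + 1/r := by
        rw [hp₀]; field_simp
      rw [h1]
      norm_num
    rw [hCsob]
    exact eLpNorm_le_eLpNorm_fderiv_of_le (volume : Measure ℂ) hf hsupp hp1 h2p hpq
      isBounded_closedBall
  -- gradient Hölder
  have hg2 : eLpNorm (fderiv ℝ f) p volume ≤ eLpNorm (fderiv ℝ f) 2 volume * M := by
    have hgm : AEStronglyMeasurable (fderiv ℝ f)
        ((volume : Measure ℂ).restrict (closedBall (0:ℂ) 1)) :=
      (hf.continuous_fderiv one_ne_zero).aestronglyMeasurable.restrict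
    calc eLpNorm (fderiv ℝ f) p volume
        = eLpNorm (fderiv ℝ f) p ((volume : Measure ℂ).restrict (closedBall (0:ℂ) 1)) :=
          (eLpNorm_restrict_eq_of_support_subset (ε := ℂ →L[ℝ] ℝ) hgsupp).symm
      _ ≤ eLpNorm (fderiv ℝ f) 2 ((volume : Measure ℂ).restrict (closedBall (0:ℂ) 1)) *
          ((volume : Measure ℂ).restrict (closedBall (0:ℂ) 1)) univ
            ^ (1/((p : ℝ≥0∞)).toReal - 1/(2:ℝ≥0∞).toReal) := by
          have h2le : ((p : ℝ≥0∞)) ≤ 2 := by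
            rw [← ENNReal.coe_ofNat, ENNReal.coe_le_coe, ← NNReal.coe_le_coe, hpc]
            norm_num; linarith
          exact eLpNorm_le_eLpNorm_mul_rpow_measure_univ h2le hgm
      _ = eLpNorm (fderiv ℝ f) 2 volume * M := by
          rw [eLpNorm_restrict_eq_of_support_subset (ε := ℂ →L[ℝ] ℝ) hgsupp, Measure.restrict_apply_univ, hM]
          congr 2
          rw [ENNReal.coe_toReal, hpc, ENNReal.toReal_ofNat]
  -- eLpNorm identification for gradient
  have hgnorm : eLpNorm (fderiv ℝ f) 2 volume
      = (∫⁻ z : ℂ, ENNReal.ofReal (‖fderiv ℝ f z‖ ^ 2)) ^ ((1:ℝ)/2) := by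
    rw [eLpNorm_eq_lintegral_rpow_enorm_toReal two_ne_zero ENNReal.ofNat_ne_top]
    rw [ENNReal.toReal_ofNat]
    congr 1
    apply lintegral_congr
    intro z
    rw [← ofReal_norm,
      ENNReal.ofReal_rpow_of_nonneg (norm_nonneg _) (by norm_num)]
    congr 1
    rw [← Real.rpow_natCast ‖fderiv ℝ f z‖ 2]
    norm_num
  -- assembly
  have hmain : (∫⁻ z : ℂ, ENNReal.ofReal (|f z| ^ q * ‖z‖ ^ α)) ^ (1/q)
      ≤ D * (∫⁻ z : ℂ, ENNReal.ofReal (‖fderiv ℝ f z‖ ^ 2)) ^ ((1:ℝ)/2) := by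
    calc (∫⁻ z : ℂ, ENNReal.ofReal (|f z| ^ q * ‖z‖ ^ α)) ^ (1/q)
        ≤ ((∫⁻ z : ℂ, ENNReal.ofReal (|f z| ^ r)) ^ (1/s') * K) ^ (1/q) :=
          ENNReal.rpow_le_rpow hHolder (by positivity)
      _ = (∫⁻ z : ℂ, ENNReal.ofReal (|f z| ^ r)) ^ (1/r) * K ^ (1/q) := by
          rw [ENNReal.mul_rpow_of_nonneg _ _ (by positivity), ← ENNReal.rpow_mul]
          congr 2
          rw [hr]
          field_simp
      _ = K ^ (1/q) * eLpNorm f r' volume := by rw [hfnorm, mul_comm]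
      _ ≤ K ^ (1/q) * (Csob * (eLpNorm (fderiv ℝ f) 2 volume * M)) := by
          apply mul_le_mul' le_rfl
          exact hsob.trans (mul_le_mul' le_rfl hg2)
      _ = D * (∫⁻ z : ℂ, ENNReal.ofReal (‖fderiv ℝ f z‖ ^ 2)) ^ ((1:ℝ)/2) := by
          rw [hD, hgnorm]; ring
  calc (∫⁻ z : ℂ, ENNReal.ofReal (|f z| ^ q * ‖z‖ ^ α)) ^ (1/q)
      ≤ D * (∫⁻ z : ℂ, ENNReal.ofReal (‖fderiv ℝ f z‖ ^ 2)) ^ ((1:ℝ)/2) := hmain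
    _ ≤ ENNReal.ofReal (D.toReal + 1) *
        ((∫⁻ z : ℂ, ENNReal.ofReal (|f z| ^ 2 * ‖z‖ ^ α)) ^ ((1:ℝ)/2) +
          (∫⁻ z : ℂ, ENNReal.ofReal (‖fderiv ℝ f z‖ ^ 2)) ^ ((1:ℝ)/2)) := by
        apply mul_le_mul'
        · calc D = ENNReal.ofReal D.toReal := (ENNReal.ofReal_toReal hDlt.ne).symm
            _ ≤ ENNReal.ofReal (D.toReal + 1) := ENNReal.ofReal_le_ofReal (by linarith)
        · exact le_add_self
end

section
/- Let 0 < β < 1. Let v be a real-valued function, continuous on the closed unit disc {z ∈ ℂ : |z| ≤ 1}, twice continuously differentiable on the punctured open disc {0 < |z| < 1}, satisfying Δv ≥ 0 there (Δ the Euclidean Laplacian on ℂ ≅ ℝ²) and sup_{0<|z|<1} |z|^{1−β} ‖∇v(z)‖ < ∞. Then max_{|z|≤1} v = max_{|z|=1} v. -/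
/-- The Euclidean Laplacian on `ℂ ≅ ℝ²`. -/
noncomputable def lap (v : ℂ → ℝ) (z : ℂ) : ℝ :=
  fderiv ℝ (fun w => fderiv ℝ v w 1) z 1 +
    fderiv ℝ (fun w => fderiv ℝ v w Complex.I) z Complex.I

open Filter Topology Set Complex


lemma second_test {g G : ℝ → ℝ} {c : ℝ}
    (hg : ∀ᶠ t in 𝓝 (0:ℝ), HasDerivAt g (G t) t)
    (hG : HasDerivAt G c 0) (hmax : IsLocalMax g 0) : c ≤ 0 := by
  by_contra hc
  push_neg at hc
  have hG0 : G 0 = 0 := by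
    have h1 : deriv g 0 = G 0 := hg.self_of_nhds.deriv
    rw [← h1]; exact hmax.deriv_eq_zero
  have hslope := hasDerivAt_iff_tendsto_slope.mp hG
  have hpos : ∀ᶠ t in 𝓝[>] (0:ℝ), 0 < G t := by
    have h2 : ∀ᶠ t in 𝓝[≠] (0:ℝ), 0 < slope G 0 t :=
      hslope.eventually (eventually_gt_nhds hc)
    have h3 : ∀ᶠ t in 𝓝[>] (0:ℝ), 0 < slope G 0 t :=
      h2.filter_mono (nhdsWithin_mono 0 (fun t ht => ne_of_gt ht))
    filter_upwards [h3, self_mem_nhdsWithin] with t ht ht0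
    have hs : slope G 0 t = G t / t := by simp [slope_def_field, hG0]
    rw [hs] at ht
    exact (div_pos_iff.mp ht).resolve_right
      (fun h => absurd ht0 (not_lt.mpr h.2.le)) |>.1
  obtain ⟨u, hu, hIoo⟩ := mem_nhdsGT_iff_exists_Ioo_subset.mp hpos
  obtain ⟨r, hr, hgr⟩ := Metric.eventually_nhds_iff.mp hg
  obtain ⟨rm, hrm, hm⟩ := Metric.eventually_nhds_iff.mp hmax
  have hupos : 0 < u := hu
  set t0 : ℝ := min (min r rm) u / 2 with ht0def
  have ht0pos : 0 < t0 := by positivity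
  have hmin1 : min (min r rm) u ≤ r := le_trans (min_le_left _ _) (min_le_left _ _)
  have hmin2 : min (min r rm) u ≤ rm := le_trans (min_le_left _ _) (min_le_right _ _)
  have hmin3 : min (min r rm) u ≤ u := min_le_right _ _
  have ht0r : t0 < r := by simp only [ht0def]; linarith
  have ht0rm : t0 < rm := by simp only [ht0def]; linarith
  have ht0u : t0 < u := by simp only [ht0def]; linarith
  -- g is strictly monotone on [0, t0]
  have hmono : StrictMonoOn g (Icc 0 t0) := by
    apply strictMonoOn_of_hasDerivWithinAt_pos (convex_Icc 0 t0) ?cont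
      (f' := G) ?deriv ?pos
    case cont =>
      intro x hx
      have hxr : dist x 0 < r := by
        rw [Real.dist_eq, sub_zero, _root_.abs_of_nonneg hx.1]
        exact lt_of_le_of_lt hx.2 ht0r
      exact ((hgr hxr).differentiableAt.continuousAt).continuousWithinAt
    case deriv =>
      intro x hx
      rw [interior_Icc] at hx
      have hxr : dist x 0 < r := by
        rw [Real.dist_eq, sub_zero, _root_.abs_of_nonneg hx.1.le]
        exact lt_of_lt_of_le hx.2 (le_refl t0) |>.trans ht0r
      exact ((hgr hxr).hasDerivWithinAt)
    case pos =>
      intro x hx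
      rw [interior_Icc] at hx
      exact hIoo ⟨hx.1, lt_trans hx.2 ht0u⟩
  have hlt : g 0 < g t0 := hmono (left_mem_Icc.mpr ht0pos.le)
    (right_mem_Icc.mpr ht0pos.le) ht0pos
  have hle : g t0 ≤ g 0 := hm (by rw [Real.dist_eq, sub_zero, _root_.abs_of_pos ht0pos]; exact ht0rm)
  exact absurd hle (not_le.mpr hlt)

lemma dir2_nonpos {w : ℂ → ℝ} {z : ℂ} (hw : ContDiffAt ℝ 2 w z)
    (hmax : IsLocalMax w z) (d : ℂ) :
    fderiv ℝ (fun y => fderiv ℝ w y d) z d ≤ 0 := by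
  set F : ℂ → ℝ := fun y => fderiv ℝ w y d with hF
  -- the line map
  have hline : ∀ t : ℝ, HasDerivAt (fun s : ℝ => z + s • d) d t := by
    intro t
    simpa using ((hasDerivAt_id t).smul_const d).const_add z
  have hlinecont : Continuous (fun s : ℝ => z + s • d) := by continuity
  have hl0 : (fun s : ℝ => z + s • d) 0 = z := by simp
  -- eventual C² of w near z
  have hev : ∀ᶠ y in 𝓝 z, ContDiffAt ℝ 2 w y := hw.eventually (by simp)
  -- g, G
  set g : ℝ → ℝ := fun t => w (z + t • d) with hg
  set G : ℝ → ℝ := fun t => F (z + t • d) with hGdef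
  have htend : Tendsto (fun s : ℝ => z + s • d) (𝓝 0) (𝓝 z) := by
    have h := hlinecont.continuousAt (x := (0:ℝ))
    unfold ContinuousAt at h
    simpa using h
  have hgd : ∀ᶠ t in 𝓝 (0:ℝ), HasDerivAt g (G t) t := by
    filter_upwards [htend.eventually hev] with t ht
    have hdiff : DifferentiableAt ℝ w (z + t • d) := ht.differentiableAt (by norm_num)
    exact hdiff.hasFDerivAt.comp_hasDerivAt t (hline t)
  -- F is differentiable at z
  have hF1 : ContDiffAt ℝ 1 (fderiv ℝ w) z := hw.fderiv_right (le_refl _)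
  have hFd : DifferentiableAt ℝ F z := by
    have : ContDiffAt ℝ 1 F z := hF1.clm_apply contDiffAt_const
    exact this.differentiableAt (by norm_num)
  have hGd : HasDerivAt G (fderiv ℝ F z d) 0 := by
    exact (hFd.hasFDerivAt).comp_hasDerivAt_of_eq 0 (hline 0) (by simp)
  have hgmax : IsLocalMax g 0 := by
    have := htend.eventually hmax
    filter_upwards [this] with t ht
    simpa [hg, hl0] using ht
  exact second_test hgd hGd hgmax

lemma lap_nonpos_of_isLocalMax {w : ℂ → ℝ} {z : ℂ} (hw : ContDiffAt ℝ 2 w z)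
    (hmax : IsLocalMax w z) : lap w z ≤ 0 := by
  have h1 := dir2_nonpos hw hmax 1
  have h2 := dir2_nonpos hw hmax Complex.I
  unfold lap; linarith

lemma ev_diff {f : ℂ → ℝ} {z : ℂ} (h : ContDiffAt ℝ 2 f z) :
    ∀ᶠ y in 𝓝 z, DifferentiableAt ℝ f y :=
  (h.eventually (by simp)).mono (fun y hy => hy.differentiableAt (by norm_num))

lemma diff_dir {f : ℂ → ℝ} {z : ℂ} (h : ContDiffAt ℝ 2 f z) (d : ℂ) :
    DifferentiableAt ℝ (fun y => fderiv ℝ f y d) z :=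
  ((h.fderiv_right (m := 1) (by norm_num)).clm_apply contDiffAt_const).differentiableAt (by norm_num)

lemma lap_add {u w : ℂ → ℝ} {z : ℂ} (hu : ContDiffAt ℝ 2 u z) (hw : ContDiffAt ℝ 2 w z) :
    lap (fun y => u y + w y) z = lap u z + lap w z := by
  have key : ∀ d : ℂ, fderiv ℝ (fun y => fderiv ℝ (fun x => u x + w x) y d) z d =
      fderiv ℝ (fun y => fderiv ℝ u y d) z d + fderiv ℝ (fun y => fderiv ℝ w y d) z d := by
    intro d
    have hA : (fun y => fderiv ℝ (fun x => u x + w x) y d) =ᶠ[𝓝 z]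
        (fun y => fderiv ℝ u y d + fderiv ℝ w y d) := by
      filter_upwards [ev_diff hu, ev_diff hw] with y hy1 hy2
      rw [fderiv_fun_add hy1 hy2]; rfl
    rw [hA.fderiv_eq, fderiv_fun_add (diff_dir hu d) (diff_dir hw d)]
    rfl
  unfold lap
  rw [key 1, key Complex.I]; ring

lemma lap_const_mul {u : ℂ → ℝ} {z : ℂ} (hu : ContDiffAt ℝ 2 u z) (c : ℝ) :
    lap (fun y => c * u y) z = c * lap u z := by
  have key : ∀ d : ℂ, fderiv ℝ (fun y => fderiv ℝ (fun x => c * u x) y d) z d =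
      c * fderiv ℝ (fun y => fderiv ℝ u y d) z d := by
    intro d
    have hA : (fun y => fderiv ℝ (fun x => c * u x) y d) =ᶠ[𝓝 z]
        (fun y => c * fderiv ℝ u y d) := by
      filter_upwards [ev_diff hu] with y hy
      rw [fderiv_const_mul hy]; rfl
    rw [hA.fderiv_eq, fderiv_const_mul (diff_dir hu d)]
    rfl
  unfold lap
  rw [key 1, key Complex.I]; ring

noncomputable def DnormSq (y : ℂ) : ℂ →L[ℝ] ℝ :=
  (2*y.re) • Complex.reCLM + (2*y.im) • Complex.imCLM

lemma hasFDerivAt_normSq (y : ℂ) : HasFDerivAt Complex.normSq (DnormSq y) y := by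
  have hre : HasFDerivAt (fun w : ℂ => w.re) Complex.reCLM y := Complex.reCLM.hasFDerivAt
  have him : HasFDerivAt (fun w : ℂ => w.im) Complex.imCLM y := Complex.imCLM.hasFDerivAt
  have h := (hre.mul hre).add (him.mul him)
  have hfun : Complex.normSq = fun w : ℂ => w.re * w.re + w.im * w.im := by
    funext w; exact Complex.normSq_apply w
  rw [hfun]
  refine h.congr_fderiv ?_
  unfold DnormSq
  ext w; simp; ring

lemma contDiff_normSq : ContDiff ℝ 2 Complex.normSq := by
  have h := contDiff_norm_sq (𝕜 := ℂ) (E := ℂ) (n := 2)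
  convert h using 1
  funext y
  exact (Complex.sq_norm y).symm

section barrier
variable (κ : ℝ)

noncomputable def bar (z : ℂ) : ℝ := Complex.normSq z ^ κ

lemma contDiffAt_bar {z : ℂ} (hz : z ≠ 0) : ContDiffAt ℝ 2 (bar κ) z := by
  have h0 : Complex.normSq z ≠ 0 := by
    simpa [Complex.normSq_eq_zero] using hz
  exact (Real.contDiffAt_rpow_const_of_ne h0).comp z (contDiff_normSq.contDiffAt)

lemma hasFDerivAt_bar {y : ℂ} (hy : y ≠ 0) :
    HasFDerivAt (bar κ) ((κ * Complex.normSq y ^ (κ-1)) • DnormSq y) y := by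
  have h0 : Complex.normSq y ≠ 0 := by simpa [Complex.normSq_eq_zero] using hy
  have hr : HasDerivAt (fun x : ℝ => x ^ κ) (κ * Complex.normSq y ^ (κ-1))
      (Complex.normSq y) := Real.hasDerivAt_rpow_const (Or.inl h0)
  exact hr.comp_hasFDerivAt y (hasFDerivAt_normSq y)

lemma lap_bar {z : ℂ} (hz : z ≠ 0) :
    lap (bar κ) z = 4 * κ^2 * Complex.normSq z ^ (κ - 1) := by
  have h0 : (0:ℝ) < Complex.normSq z := by
    simpa [Complex.normSq_pos] using hz
  -- first derivative in direction d, as a scalar function of y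
  have hev : ∀ d : ℂ, (fun y => fderiv ℝ (bar κ) y d) =ᶠ[𝓝 z]
      (fun y => κ * (Complex.normSq y ^ (κ-1) * (2*y.re*d.re + 2*y.im*d.im))) := by
    intro d
    have hne : ∀ᶠ y in 𝓝 z, y ≠ 0 := isOpen_compl_singleton.eventually_mem hz
    filter_upwards [hne] with y hy
    rw [(hasFDerivAt_bar κ hy).fderiv]
    simp [DnormSq, Complex.reCLM_apply, Complex.imCLM_apply]
    ring
  -- second derivative in direction d
  have key : ∀ d : ℂ, fderiv ℝ (fun y => fderiv ℝ (bar κ) y d) z d =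
      κ * ((κ-1) * Complex.normSq z ^ (κ-2) * (2*z.re*d.re + 2*z.im*d.im)^2
        + Complex.normSq z ^ (κ-1) * (2*d.re*d.re + 2*d.im*d.im)) := by
    intro d
    rw [(hev d).fderiv_eq]
    have hr : HasDerivAt (fun x : ℝ => x ^ (κ-1)) ((κ-1) * Complex.normSq z ^ (κ-1-1))
        (Complex.normSq z) := Real.hasDerivAt_rpow_const (Or.inl h0.ne')
    have hinner : HasFDerivAt (fun y : ℂ => Complex.normSq y ^ (κ-1))
        (((κ-1) * Complex.normSq z ^ (κ-2)) • DnormSq z) z := by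
      have := hr.comp_hasFDerivAt z (hasFDerivAt_normSq z)
      rw [show κ - 2 = κ - 1 - 1 by ring]; exact this
    have hre : HasFDerivAt (fun w : ℂ => w.re) Complex.reCLM z := Complex.reCLM.hasFDerivAt
    have him : HasFDerivAt (fun w : ℂ => w.im) Complex.imCLM z := Complex.imCLM.hasFDerivAt
    have hlin : HasFDerivAt (fun y : ℂ => 2*y.re*d.re + 2*y.im*d.im)
        ((2*d.re) • Complex.reCLM + (2*d.im) • Complex.imCLM) z := by
      have h1 := ((hre.const_mul (2:ℝ)).mul_const d.re).add ((him.const_mul (2:ℝ)).mul_const d.im)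
      refine h1.congr_fderiv ?_
      ext w
      simp
      ring
    have hprod := (hinner.mul hlin).const_mul κ
    have hprod' : HasFDerivAt (fun y : ℂ => κ * (Complex.normSq y ^ (κ-1) * (2*y.re*d.re + 2*y.im*d.im))) _ z := hprod
    rw [hprod'.fderiv]
    simp [DnormSq, Complex.reCLM_apply, Complex.imCLM_apply]
    ring
  unfold lap
  rw [key 1, key Complex.I]
  have hpow : Complex.normSq z ^ (κ-2) * Complex.normSq z = Complex.normSq z ^ (κ-1) := by
    nth_rewrite 2 [← Real.rpow_one (Complex.normSq z)]
    rw [← Real.rpow_add h0]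
    congr 1
    ring
  have hns : z.re*z.re + z.im*z.im = Complex.normSq z := (Complex.normSq_apply z).symm
  simp only [Complex.one_re, Complex.one_im, Complex.I_re, Complex.I_im]
  linear_combination (4*κ*(κ-1)) * hpow + (4*κ*(κ-1)*Complex.normSq z ^ (κ-2)) * hns

end barrier

lemma holder {β M : ℝ} (hβ0 : 0 < β) {v : ℂ → ℝ}
    (hcont : ContinuousOn v {z : ℂ | ‖z‖ ≤ 1})
    (hC2 : ContDiffOn ℝ 2 v {z : ℂ | ‖z‖ < 1 ∧ z ≠ 0})
    (hgrad : ∀ z : ℂ, z ≠ 0 → ‖z‖ < 1 →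
      ‖z‖ ^ (1 - β) * ‖fderiv ℝ v z‖ ≤ M)
    {z : ℂ} (hz : z ≠ 0) (hz1 : ‖z‖ < 1) :
    v 0 ≤ v z + (M / β) * ‖z‖ ^ β := by
  have hUopen : IsOpen {z : ℂ | ‖z‖ < 1 ∧ z ≠ 0} := by
    have h1 : IsOpen {z : ℂ | ‖z‖ < 1} :=
      isOpen_lt (continuous_norm) continuous_const
    exact h1.inter isOpen_compl_singleton
  have haz : 0 < ‖z‖ := norm_pos_iff.mpr hz
  have hM : 0 ≤ M := le_trans (by positivity) (hgrad z hz hz1)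
  set g : ℝ → ℝ := fun t => v (t • z) with hgdef
  set φ : ℝ → ℝ := fun t => (M / β) * ‖z‖ ^ β * t ^ β with hφdef
  -- membership of the segment
  have hmem : ∀ t : ℝ, 0 < t → t ≤ 1 → (t • z) ∈ {z : ℂ | ‖z‖ < 1 ∧ z ≠ 0} := by
    intro t ht0 ht1
    constructor
    · have : ‖t • z‖ = t * ‖z‖ := by
        rw [norm_smul, Real.norm_eq_abs, abs_of_pos ht0]
      rw [this]
      calc t * ‖z‖ ≤ 1 * ‖z‖ := by
            apply mul_le_mul_of_nonneg_right ht1 haz.le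
        _ = ‖z‖ := one_mul _
        _ < 1 := hz1
    · simp only [ne_eq, smul_eq_zero, not_or]
      exact ⟨ht0.ne', hz⟩
  -- derivative of g
  have hg' : ∀ t : ℝ, 0 < t → t ≤ 1 → HasDerivAt g (fderiv ℝ v (t • z) z) t := by
    intro t ht0 ht1
    have hd : DifferentiableAt ℝ v (t • z) :=
      ((hC2.contDiffAt (hUopen.mem_nhds (hmem t ht0 ht1))).differentiableAt (by norm_num))
    have hline : HasDerivAt (fun s : ℝ => s • z) z t := by
      simpa using (hasDerivAt_id t).smul_const z
    exact hd.hasFDerivAt.comp_hasDerivAt t hline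
  -- derivative of φ
  have hφ' : ∀ t : ℝ, 0 < t → HasDerivAt φ (M * ‖z‖ ^ β * t ^ (β - 1)) t := by
    intro t ht0
    have := (Real.hasDerivAt_rpow_const (x := t) (p := β) (Or.inl ht0.ne')).const_mul
      ((M / β) * ‖z‖ ^ β)
    refine this.congr_deriv ?_
    field_simp
  -- the bound |g'| ≤ φ'
  have hbound : ∀ t : ℝ, 0 < t → t ≤ 1 →
      |fderiv ℝ v (t • z) z| ≤ M * ‖z‖ ^ β * t ^ (β - 1) := by
    intro t ht0 ht1
    have hmem' := hmem t ht0 ht1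
    have habs : ‖t • z‖ = t * ‖z‖ := by
      rw [norm_smul, Real.norm_eq_abs, abs_of_pos ht0]
    have htz : (0:ℝ) < t * ‖z‖ := by positivity
    have hg := hgrad (t • z) hmem'.2 hmem'.1
    rw [habs] at hg
    have hXpos : (0:ℝ) < (t * ‖z‖) ^ (1 - β) := Real.rpow_pos_of_pos htz _
    have hnorm : ‖fderiv ℝ v (t • z)‖ ≤ M * (t * ‖z‖) ^ (β - 1) := by
      have h1 : ‖fderiv ℝ v (t • z)‖ ≤ M / (t * ‖z‖) ^ (1 - β) := by
        rw [le_div_iff₀ hXpos]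
        linarith [hg]
      rwa [div_eq_mul_inv, ← Real.rpow_neg htz.le, neg_sub] at h1
    calc |fderiv ℝ v (t • z) z| ≤ ‖fderiv ℝ v (t • z)‖ * ‖z‖ := by
          exact (fderiv ℝ v (t • z)).le_opNorm z
      _ ≤ M * (t * ‖z‖) ^ (β - 1) * ‖z‖ := by
          apply mul_le_mul_of_nonneg_right hnorm (norm_nonneg z)
      _ = M * ‖z‖ ^ β * t ^ (β - 1) := by
          rw [Real.mul_rpow ht0.le haz.le]
          rw [show (β:ℝ) = (β - 1) + 1 by ring, Real.rpow_add haz, Real.rpow_one]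
          ring_nf
  -- monotonicity of φ + g on [s,1]
  have hkey : ∀ s : ℝ, 0 < s → s < 1 → g s ≤ g 1 + φ 1 := by
    intro s hs0 hs1
    have hmono : MonotoneOn (fun t => φ t + g t) (Icc s 1) := by
      apply monotoneOn_of_hasDerivWithinAt_nonneg (convex_Icc s 1)
        (f' := fun t => M * ‖z‖ ^ β * t ^ (β - 1) + fderiv ℝ v (t • z) z)
      · intro x hx
        have hx0 : 0 < x := lt_of_lt_of_le hs0 hx.1
        exact (((hφ' x hx0).add (hg' x hx0 hx.2)).continuousAt).continuousWithinAt
      · intro x hx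
        rw [interior_Icc] at hx
        have hx0 : 0 < x := lt_trans hs0 hx.1
        exact ((hφ' x hx0).add (hg' x hx0 hx.2.le)).hasDerivWithinAt
      · intro x hx
        rw [interior_Icc] at hx
        have hx0 : 0 < x := lt_trans hs0 hx.1
        have := hbound x hx0 hx.2.le
        have h2 := abs_le.mp this
        linarith [h2.1]
    have h := hmono (left_mem_Icc.mpr hs1.le) (right_mem_Icc.mpr hs1.le) hs1.le
    have hφs : 0 ≤ φ s := by
      have : (0:ℝ) ≤ s ^ β := Real.rpow_nonneg hs0.le β
      have : 0 ≤ (M / β) * ‖z‖ ^ β := by positivity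
      simp only [hφdef]
      positivity
    simp only at h
    linarith
  -- take the limit s → 0⁺
  have hlim : Tendsto g (𝓝[>] (0:ℝ)) (𝓝 (v 0)) := by
    have hc0 : ContinuousWithinAt v {z : ℂ | ‖z‖ ≤ 1} 0 :=
      hcont 0 (by simp)
    have hmap : Tendsto (fun s : ℝ => s • z) (𝓝[>] (0:ℝ))
        (𝓝[{z : ℂ | ‖z‖ ≤ 1}] 0) := by
      apply tendsto_nhdsWithin_of_tendsto_nhds_of_eventually_within
      · have : Continuous (fun s : ℝ => s • z) := by continuity
        have h := this.continuousAt (x := (0:ℝ))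
        have h0 : (0:ℝ) • z = 0 := by simp
        rw [ContinuousAt, h0] at h
        exact h.mono_left nhdsWithin_le_nhds
      · filter_upwards [Ioo_mem_nhdsGT_of_mem (by norm_num : (0:ℝ) ∈ Ico 0 1)] with s hs
        have := (hmem s hs.1 hs.2.le).1
        exact le_of_lt this
    exact hc0.tendsto.comp hmap
  have hev : ∀ᶠ s in 𝓝[>] (0:ℝ), g s ≤ g 1 + φ 1 := by
    filter_upwards [Ioo_mem_nhdsGT_of_mem (by norm_num : (0:ℝ) ∈ Ico 0 1)] with s hs
    exact hkey s hs.1 hs.2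
  have hfin : v 0 ≤ g 1 + φ 1 :=
    le_of_tendsto hlim hev
  have hg1 : g 1 = v z := by simp [hgdef]
  have hφ1 : φ 1 = (M / β) * ‖z‖ ^ β := by
    simp [hφdef, Real.one_rpow]
  rw [hg1, hφ1] at hfin
  exact hfin


/-- Maximum principle at a cone singularity: if `v` is continuous on the closed unit
disc, `C²` and subharmonic on the punctured open disc, with cone gradient
`|z|^{1−β}‖∇v‖` bounded there, then the maximum of `v` over the closed disc equals its
maximum over the boundary circle. -/
theorem stmt13 (β : ℝ) (hβ0 : 0 < β) (hβ1 : β < 1) (v : ℂ → ℝ)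
    (hcont : ContinuousOn v {z : ℂ | ‖z‖ ≤ 1})
    (hC2 : ContDiffOn ℝ 2 v {z : ℂ | ‖z‖ < 1 ∧ z ≠ 0})
    (hsub : ∀ z : ℂ, z ≠ 0 → ‖z‖ < 1 → 0 ≤ lap v z)
    (hgrad : ∃ M : ℝ, ∀ z : ℂ, z ≠ 0 → ‖z‖ < 1 →
      ‖z‖ ^ (1 - β) * ‖fderiv ℝ v z‖ ≤ M) :
    sSup (v '' {z : ℂ | ‖z‖ ≤ 1}) = sSup (v '' {z : ℂ | ‖z‖ = 1}) := by
  obtain ⟨M, hgradM⟩ := hgrad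
  set D := {z : ℂ | ‖z‖ ≤ 1} with hDdef
  set S := {z : ℂ | ‖z‖ = 1} with hSdef
  have hUopen : IsOpen {z : ℂ | ‖z‖ < 1 ∧ z ≠ 0} := by
    have h1 : IsOpen {z : ℂ | ‖z‖ < 1} :=
      isOpen_lt (continuous_norm) continuous_const
    exact h1.inter isOpen_compl_singleton
  have hDball : D = Metric.closedBall (0:ℂ) 1 := by
    ext z; simp [hDdef, Metric.mem_closedBall, Complex.dist_eq]
  have hSsphere : S = Metric.sphere (0:ℂ) 1 := by
    ext z; simp [hSdef, Metric.mem_sphere, Complex.dist_eq]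
  have hDcompact : IsCompact D := hDball ▸ isCompact_closedBall 0 1
  have hScompact : IsCompact S := hSsphere ▸ isCompact_sphere 0 1
  have hSD : S ⊆ D := fun z hz => le_of_eq hz
  have hDne : D.Nonempty := ⟨0, by simp [hDdef]⟩
  have hSne : S.Nonempty := ⟨1, by simp [hSdef]⟩
  obtain ⟨z₁, hz₁S, hz₁max⟩ := hScompact.exists_isMaxOn hSne (hcont.mono hSD)
  have hM : 0 ≤ M := by
    have h := hgradM (1/2 : ℂ) (by norm_num) (by norm_num)
    refine le_trans ?_ h
    positivity
  -- key claim : v is bounded by v z₁ on all of D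
  have key : ∀ z ∈ D, v z ≤ v z₁ := by
    intro z hzD
    refine le_of_forall_pos_le_add ?_
    intro ε hε
    set κ : ℝ := β / 4 with hκdef
    have hκ0 : 0 < κ := by positivity
    set w : ℂ → ℝ := fun y => v y + ε * bar κ y with hwdef
    have hbarcont : Continuous (bar κ) :=
      Complex.continuous_normSq.rpow_const (fun y => Or.inr hκ0.le)
    have hbarnonneg : ∀ y : ℂ, 0 ≤ bar κ y :=
      fun y => Real.rpow_nonneg (Complex.normSq_nonneg y) κ
    have hwcont : ContinuousOn w D :=
      hcont.add ((hbarcont.continuousOn).const_smul ε)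
    obtain ⟨y₀, hy₀D, hy₀max⟩ := hDcompact.exists_isMaxOn hDne hwcont
    by_cases hy1 : ‖y₀‖ = 1
    · -- the max of w is on the circle
      have hbar1 : bar κ y₀ = 1 := by
        have : Complex.normSq y₀ = 1 := by
          rw [← Complex.sq_norm, hy1]; norm_num
        rw [bar, this, Real.one_rpow]
      calc v z ≤ w z := by
            simp only [hwdef]
            nlinarith [hbarnonneg z]
        _ ≤ w y₀ := hy₀max hzD
        _ = v y₀ + ε := by rw [hwdef]; simp [hbar1]
        _ ≤ v z₁ + ε := by
            have hvv : v y₀ ≤ v z₁ := hz₁max (show y₀ ∈ S from hy1)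
            linarith
    · exfalso
      have hy₀lt : ‖y₀‖ < 1 := lt_of_le_of_ne hy₀D hy1
      by_cases hy0 : y₀ = 0
      · -- contradiction at the origin via the Hölder estimate
        set C : ℝ := M / β with hCdef
        have hC0 : 0 ≤ C := by positivity
        set t : ℝ := min (1/2) ((ε / (C+1)) ^ (2/β)) with htdef
        have htpos : 0 < t := by
          apply lt_min (by norm_num)
          apply Real.rpow_pos_of_pos
          positivity
        have ht12 : t ≤ 1/2 := min_le_left _ _
        have htlt1 : t < 1 := lt_of_le_of_lt ht12 (by norm_num)
        set z' : ℂ := (t : ℂ) with hz'def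
        have habsz' : ‖z'‖ = t := by
          rw [hz'def, Complex.norm_real, Real.norm_eq_abs, _root_.abs_of_pos htpos]
        have hz'ne : z' ≠ 0 := by
          simp only [hz'def, ne_eq, Complex.ofReal_eq_zero]
          exact htpos.ne'
        have hz'lt : ‖z'‖ < 1 := by rw [habsz']; exact htlt1
        have hH := holder hβ0 hcont hC2 hgradM hz'ne hz'lt
        rw [habsz'] at hH
        -- bar κ z' = t ^ (β/2)
        have hbarz' : bar κ z' = t ^ (β/2) := by
          rw [bar, hz'def, Complex.normSq_ofReal]
          have h2 : t * t = t ^ (2:ℝ) := by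
            rw [show (2:ℝ) = ((2:ℕ):ℝ) by norm_num, Real.rpow_natCast]; ring
          rw [h2, ← Real.rpow_mul htpos.le]
          congr 1
          rw [hκdef]; ring
        have hbar0 : bar κ (0:ℂ) = 0 := by
          rw [bar, map_zero, Real.zero_rpow hκ0.ne']
        -- smallness : C * t ^ (β/2) < ε
        have htsmall : C * t ^ (β/2) < ε := by
          have h1 : t ^ (β/2) ≤ ε / (C+1) := by
            have hle : t ≤ (ε / (C+1)) ^ (2/β) := min_le_right _ _
            have h2 := Real.rpow_le_rpow htpos.le hle (by positivity : (0:ℝ) ≤ β/2)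
            rwa [← Real.rpow_mul (by positivity), show (2/β) * (β/2) = 1 by
              field_simp, Real.rpow_one] at h2
          calc C * t ^ (β/2) ≤ C * (ε / (C+1)) := by
                apply mul_le_mul_of_nonneg_left h1 hC0
            _ < ε := by
                rw [mul_div_assoc']
                rw [div_lt_iff₀ (by positivity)]
                nlinarith
        -- t^β = t^(β/2) * t^(β/2)
        have htβ : t ^ β = t ^ (β/2) * t ^ (β/2) := by
          rw [← Real.rpow_add htpos]; congr 1; ring
        have hz'D : z' ∈ D := by
          simp only [hDdef, mem_setOf_eq, habsz']
          exact htlt1.le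
        have hcontr : v z' + ε * bar κ z' ≤ v y₀ + ε * bar κ y₀ := hy₀max hz'D
        rw [hy0, hbar0, hbarz'] at hcontr
        -- hcontr : v z' + ε * t^(β/2) ≤ v 0 + ε * 0
        -- hH : v 0 ≤ v z' + C * t ^ β
        have htp : 0 < t ^ (β/2) := Real.rpow_pos_of_pos htpos _
        nlinarith [hH, hcontr, htp, htβ, htsmall]
      · -- contradiction at an interior point via the Laplacian
        have hy₀U : y₀ ∈ {z : ℂ | ‖z‖ < 1 ∧ z ≠ 0} := ⟨hy₀lt, hy0⟩
        have hvC2 : ContDiffAt ℝ 2 v y₀ := hC2.contDiffAt (hUopen.mem_nhds hy₀U)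
        have hbarC2 : ContDiffAt ℝ 2 (bar κ) y₀ := contDiffAt_bar κ hy0
        have hεbarC2 : ContDiffAt ℝ 2 (fun y => ε * bar κ y) y₀ :=
          contDiffAt_const.mul hbarC2
        have hwC2 : ContDiffAt ℝ 2 w y₀ := hvC2.add hεbarC2
        have hDnhds : D ∈ 𝓝 y₀ := by
          rw [hDball]
          apply mem_of_superset (Metric.isOpen_ball.mem_nhds ?_) Metric.ball_subset_closedBall
          simp [Metric.mem_ball, Complex.dist_eq, hy₀lt]
        have hloc : IsLocalMax w y₀ := hy₀max.isLocalMax hDnhds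
        have hlapw : lap w y₀ ≤ 0 := lap_nonpos_of_isLocalMax hwC2 hloc
        have hlapsplit : lap w y₀ = lap v y₀ + ε * lap (bar κ) y₀ := by
          rw [hwdef]
          rw [lap_add hvC2 hεbarC2, lap_const_mul hbarC2 ε]
        have hlapbar : lap (bar κ) y₀ = 4 * κ^2 * Complex.normSq y₀ ^ (κ - 1) :=
          lap_bar κ hy0
        have hρpos : 0 < Complex.normSq y₀ := by
          simpa [Complex.normSq_pos] using hy0
        have hbarpos : 0 < lap (bar κ) y₀ := by
          rw [hlapbar]
          have := Real.rpow_pos_of_pos hρpos (κ - 1)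
          positivity
        have hlapv := hsub y₀ hy0 hy₀lt
        nlinarith [hlapw, hlapsplit, hbarpos, hlapv, hε]
  -- conclude
  have hz₁D : z₁ ∈ D := hSD hz₁S
  have h1 : IsGreatest (v '' D) (v z₁) := by
    constructor
    · exact mem_image_of_mem v hz₁D
    · rintro y ⟨x, hx, rfl⟩
      exact key x hx
  have h2 : IsGreatest (v '' S) (v z₁) := by
    constructor
    · exact mem_image_of_mem v hz₁S
    · rintro y ⟨x, hx, rfl⟩
      exact hz₁max hx
  rw [h1.csSup_eq, h2.csSup_eq]
end

section
/- Let 0 < β ≤ 2/3 and let g₀ : ℂ → ℝ be continuously differentiable. Define h on the punctured closed unit disc by h(w) = g₀(|w|^{(1−β)/β} w) · |w|^{2/β − 2}. Then h is real-Fréchet differentiable at every w with 0 < |w| ≤ 1, and there is a constant C > 0, depending only on β, sup_{|z|≤1}|g₀| and sup_{|z|≤1}‖Dg₀‖, such that ‖Dh(w)‖ ≤ C for all 0 < |w| ≤ 1. -/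
open Real

theorem key (β : ℝ) (hβ0 : 0 < β) (g₀ : ℂ → ℝ) (hg : ContDiff ℝ 1 g₀)
    (w : ℂ) (hw : w ≠ 0) :
    ∃ D : ℂ →L[ℝ] ℝ,
      HasFDerivAt (fun w : ℂ =>
          g₀ ((((‖w‖ : ℝ) ^ ((1 - β) / β) : ℝ) : ℂ) * w) * ‖w‖ ^ (2 / β - 2)) D w ∧
      ‖D‖ ≤ |g₀ ((((‖w‖ : ℝ) ^ ((1 - β) / β) : ℝ) : ℂ) * w)| * (|2/β-2| * ‖w‖ ^ (2/β-3))
        + ‖w‖ ^ (2/β-2) * (‖fderiv ℝ g₀ ((((‖w‖ : ℝ) ^ ((1 - β) / β) : ℝ) : ℂ) * w)‖ *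
            ((|(1-β)/β| + 1) * ‖w‖ ^ ((1-β)/β))) := by
  set a := (1 - β) / β with ha
  set b := 2 / β - 2 with hb
  have hwpos : (0:ℝ) < ‖w‖ := norm_pos_iff.2 hw
  have hnorm : ContDiffAt ℝ 1 (norm : ℂ → ℝ) w := contDiffAt_norm ℂ hw
  have hA : HasFDerivAt (norm : ℂ → ℝ) (fderiv ℝ (norm : ℂ → ℝ) w) w :=
    (hnorm.differentiableAt one_ne_zero).hasFDerivAt
  set A := fderiv ℝ (norm : ℂ → ℝ) w with hAdef
  have hAnorm : ‖A‖ ≤ 1 := by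
    simpa using norm_fderiv_le_of_lipschitz ℝ (lipschitzWith_one_norm (E := ℂ)) (x₀ := w)
  -- derivative of ‖w‖^a
  have hP : HasFDerivAt (fun w : ℂ => ‖w‖ ^ a) ((a * ‖w‖ ^ (a-1)) • A) w :=
    hA.rpow_const (Or.inl hwpos.ne')
  -- derivative of F w = (‖w‖^a : ℂ) * w
  set F : ℂ → ℂ := fun w => ((‖w‖ ^ a : ℝ) : ℂ) * w with hF
  have hC : HasFDerivAt (fun w : ℂ => ((‖w‖ ^ a : ℝ) : ℂ))
      (Complex.ofRealCLM.comp ((a * ‖w‖ ^ (a-1)) • A)) w :=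
    Complex.ofRealCLM.hasFDerivAt.comp w hP
  set F' : ℂ →L[ℝ] ℂ :=
    (((‖w‖ ^ a : ℝ)) : ℂ) • (ContinuousLinearMap.id ℝ ℂ)
      + (Complex.ofRealCLM.comp ((a * ‖w‖ ^ (a-1)) • A)).smulRight w with hF'def
  have hFd : HasFDerivAt F F' w := hC.mul' (hasFDerivAt_id w)
  have hsw : ‖w‖ ^ (a-1) * ‖w‖ = ‖w‖ ^ a := by
    rw [← Real.rpow_add_one hwpos.ne' (a-1), sub_add_cancel]
  have hF'norm : ‖F'‖ ≤ (|a| + 1) * ‖w‖ ^ a := by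
    refine ContinuousLinearMap.opNorm_le_bound _ (by positivity) (fun v => ?_)
    have hv : F' v = ((‖w‖ ^ a : ℝ) : ℂ) * v + ((a * ‖w‖ ^ (a-1)) * A v) • w := by
      simp [hF'def, smul_eq_mul]
    calc ‖F' v‖ ≤ ‖((‖w‖ ^ a : ℝ) : ℂ) * v‖ + ‖((a * ‖w‖ ^ (a-1)) * A v) • w‖ := by
          rw [hv]; exact norm_add_le _ _
      _ = ‖w‖ ^ a * ‖v‖ + |a * ‖w‖ ^ (a-1) * A v| * ‖w‖ := by
          rw [norm_mul, norm_smul, Complex.norm_real, Real.norm_eq_abs, Real.norm_eq_abs,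
            abs_of_nonneg (rpow_nonneg hwpos.le a)]
      _ ≤ ‖w‖ ^ a * ‖v‖ + (|a| * ‖w‖ ^ (a-1) * (‖A‖ * ‖v‖)) * ‖w‖ := by
          have hAv : |A v| ≤ ‖A‖ * ‖v‖ := by
            simpa [Real.norm_eq_abs] using A.le_opNorm v
          have habs : |a * ‖w‖ ^ (a-1) * A v| ≤ |a| * ‖w‖ ^ (a-1) * (‖A‖ * ‖v‖) := by
            calc |a * ‖w‖ ^ (a-1) * A v| = |a| * ‖w‖ ^ (a-1) * |A v| := by
                  rw [abs_mul, abs_mul, abs_of_nonneg (rpow_nonneg hwpos.le _)]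
              _ ≤ |a| * ‖w‖ ^ (a-1) * (‖A‖ * ‖v‖) :=
                  mul_le_mul_of_nonneg_left hAv (by positivity)
          have := mul_le_mul_of_nonneg_right habs (norm_nonneg w)
          linarith
      _ ≤ ‖w‖ ^ a * ‖v‖ + (|a| * ‖w‖ ^ (a-1) * (1 * ‖v‖)) * ‖w‖ := by
          have h1 : ‖A‖ * ‖v‖ ≤ 1 * ‖v‖ := mul_le_mul_of_nonneg_right hAnorm (norm_nonneg v)
          have h2 := mul_le_mul_of_nonneg_left h1 (by positivity : (0:ℝ) ≤ |a| * ‖w‖ ^ (a-1))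
          have h3 := mul_le_mul_of_nonneg_right h2 (norm_nonneg w)
          linarith
      _ = ‖w‖ ^ a * ‖v‖ + |a| * (‖w‖ ^ (a-1) * ‖w‖) * ‖v‖ := by ring
      _ = (|a| + 1) * ‖w‖ ^ a * ‖v‖ := by rw [hsw]; ring
  -- derivative of g₀ ∘ F
  have hgd : HasFDerivAt g₀ (fderiv ℝ g₀ (F w)) (F w) :=
    (hg.differentiable one_ne_zero (F w)).hasFDerivAt
  have hGF : HasFDerivAt (fun w => g₀ (F w)) ((fderiv ℝ g₀ (F w)).comp F') w :=
    hgd.comp w hFd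
  -- derivative of ‖w‖^b
  have hR : HasFDerivAt (fun w : ℂ => ‖w‖ ^ b) ((b * ‖w‖ ^ (b-1)) • A) w :=
    hA.rpow_const (Or.inl hwpos.ne')
  -- product
  refine ⟨g₀ (F w) • ((b * ‖w‖ ^ (b-1)) • A) + ‖w‖ ^ b • ((fderiv ℝ g₀ (F w)).comp F'),
    hGF.mul hR, ?_⟩
  have hb1 : b - 1 = 2/β - 3 := by rw [hb]; ring
  have e1 : |b * ‖w‖ ^ (b-1)| = |b| * ‖w‖ ^ (b-1) := by
    rw [abs_mul, abs_of_nonneg (rpow_nonneg hwpos.le _)]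
  have e2 : |‖w‖ ^ b| = ‖w‖ ^ b := abs_of_nonneg (rpow_nonneg hwpos.le _)
  have hc : ‖(fderiv ℝ g₀ (F w)).comp F'‖ ≤ ‖fderiv ℝ g₀ (F w)‖ * ((|a|+1) * ‖w‖ ^ a) :=
    (ContinuousLinearMap.opNorm_comp_le _ _).trans
      (mul_le_mul_of_nonneg_left hF'norm (norm_nonneg _))
  calc ‖g₀ (F w) • ((b * ‖w‖ ^ (b-1)) • A) + ‖w‖ ^ b • ((fderiv ℝ g₀ (F w)).comp F')‖
      ≤ |g₀ (F w)| * (|b * ‖w‖ ^ (b-1)| * ‖A‖) + |‖w‖ ^ b| * ‖(fderiv ℝ g₀ (F w)).comp F'‖ := by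
        have n1 : ‖g₀ (F w) • ((b * ‖w‖ ^ (b-1)) • A)‖
            ≤ |g₀ (F w)| * (|b * ‖w‖ ^ (b-1)| * ‖A‖) := by
          refine (ContinuousLinearMap.opNorm_smul_le _ _).trans ?_
          rw [Real.norm_eq_abs]
          refine mul_le_mul_of_nonneg_left ?_ (abs_nonneg _)
          exact (ContinuousLinearMap.opNorm_smul_le _ _).trans (by rw [Real.norm_eq_abs])
        have n2 : ‖‖w‖ ^ b • ((fderiv ℝ g₀ (F w)).comp F')‖
            ≤ |‖w‖ ^ b| * ‖(fderiv ℝ g₀ (F w)).comp F'‖ := by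
          refine (ContinuousLinearMap.opNorm_smul_le _ _).trans ?_
          rw [Real.norm_eq_abs]
        exact (norm_add_le _ _).trans (add_le_add n1 n2)
    _ ≤ |g₀ (F w)| * (|b| * ‖w‖ ^ (b-1) * 1)
        + ‖w‖ ^ b * (‖fderiv ℝ g₀ (F w)‖ * ((|a|+1) * ‖w‖ ^ a)) := by
        rw [e1, e2]
        refine add_le_add (mul_le_mul_of_nonneg_left ?_ (abs_nonneg _))
          (mul_le_mul_of_nonneg_left hc (rpow_nonneg hwpos.le _))
        exact mul_le_mul_of_nonneg_left hAnorm (by positivity)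
    _ = |g₀ (F w)| * (|b| * ‖w‖ ^ (2/β-3))
        + ‖w‖ ^ (2/β-2) * (‖fderiv ℝ g₀ (F w)‖ * ((|a|+1) * ‖w‖ ^ a)) := by
        rw [← hb1, hb]; ring

/-- Boundedness of the connection of the model cone metric in the cone coordinate for
cone angle `0 < β ≤ 2/3`: the function `h(w) = g₀(W⁻¹(w)) |w|^{2/β − 2}`, with
`W⁻¹(w) = |w|^{(1−β)/β} w` and `g₀` continuously differentiable, is real-Fréchet
differentiable on the punctured closed unit disc with uniformly bounded derivative. -/
theorem stmt14 (β : ℝ) (hβ0 : 0 < β) (hβ1 : β ≤ 2 / 3)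
    (g₀ : ℂ → ℝ) (hg : ContDiff ℝ 1 g₀) :
    (∀ w : ℂ, w ≠ 0 → ‖w‖ ≤ 1 →
      DifferentiableAt ℝ
        (fun w : ℂ =>
          g₀ (((‖w‖ ^ ((1 - β) / β) : ℝ) : ℂ) * w) *
            ‖w‖ ^ (2 / β - 2)) w) ∧
    ∃ C : ℝ, 0 < C ∧
      ∀ w : ℂ, w ≠ 0 → ‖w‖ ≤ 1 →
        ‖fderiv ℝ
            (fun w : ℂ =>
              g₀ (((‖w‖ ^ ((1 - β) / β) : ℝ) : ℂ) * w) *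
                ‖w‖ ^ (2 / β - 2)) w‖ ≤ C := by
  set a := (1 - β) / β with ha
  set b := 2 / β - 2 with hb
  constructor
  · intro w hw _
    obtain ⟨D, hD, -⟩ := key β hβ0 g₀ hg w hw
    exact hD.differentiableAt
  · have hK : IsCompact (Metric.closedBall (0:ℂ) 1) := isCompact_closedBall _ _
    obtain ⟨M0, hM0⟩ := hK.exists_bound_of_continuousOn hg.continuous.continuousOn
    obtain ⟨M1, hM1⟩ := hK.exists_bound_of_continuousOn
      ((hg.continuous_fderiv one_ne_zero).continuousOn)
    set m0 := max M0 0 with hm0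
    set m1 := max M1 0 with hm1
    refine ⟨m0 * |b| + m1 * (|a| + 1) + 1, by positivity, ?_⟩
    intro w hw hw1
    have hwpos : (0:ℝ) < ‖w‖ := norm_pos_iff.2 hw
    obtain ⟨D, hD, hDle⟩ := key β hβ0 g₀ hg w hw
    rw [hD.fderiv]
    -- F w is in the closed unit ball
    have hFw : ((((‖w‖:ℝ) ^ a : ℝ)) : ℂ) * w ∈ Metric.closedBall (0:ℂ) 1 := by
      rw [Metric.mem_closedBall, dist_zero_right, norm_mul, Complex.norm_real,
        Real.norm_eq_abs, abs_of_nonneg (Real.rpow_nonneg hwpos.le a)]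
      have : ‖w‖ ^ a * ‖w‖ = ‖w‖ ^ (a + 1) := by
        rw [Real.rpow_add_one hwpos.ne' a]
      rw [this]
      have ha1 : a + 1 = 1/β := by rw [ha]; field_simp; ring
      exact Real.rpow_le_one hwpos.le hw1 (by rw [ha1]; positivity)
    have hg0 : |g₀ (((‖w‖ ^ a : ℝ) : ℂ) * w)| ≤ m0 :=
      le_trans (by simpa [Real.norm_eq_abs] using hM0 _ hFw) (le_max_left _ _)
    have hg1 : ‖fderiv ℝ g₀ (((‖w‖ ^ a : ℝ) : ℂ) * w)‖ ≤ m1 :=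
      le_trans (hM1 _ hFw) (le_max_left _ _)
    -- exponent facts
    have h2β : (3:ℝ) ≤ 2 / β := by
      rw [le_div_iff₀ hβ0]; linarith
    have hP : ‖w‖ ^ (2/β - 3) ≤ 1 :=
      Real.rpow_le_one hwpos.le hw1 (by linarith)
    have hQR : ‖w‖ ^ b * ‖w‖ ^ a ≤ 1 := by
      rw [← Real.rpow_add hwpos]
      refine Real.rpow_le_one hwpos.le hw1 ?_
      rw [hb, ha]
      have : (0:ℝ) < 1/β := by positivity
      have h1β : (3:ℝ)/2 ≤ 1 / β := by
        rw [le_div_iff₀ hβ0]; linarith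
      have : (1 - β)/β = 1/β - 1 := by field_simp
      rw [this]; linarith
    have t1 : |g₀ (((‖w‖ ^ a : ℝ) : ℂ) * w)| * (|b| * ‖w‖ ^ (2/β - 3)) ≤ m0 * |b| := by
      calc |g₀ (((‖w‖ ^ a : ℝ) : ℂ) * w)| * (|b| * ‖w‖ ^ (2/β - 3))
          ≤ m0 * (|b| * 1) := by
            refine mul_le_mul hg0 ?_ (by positivity) (le_max_right _ _)
            exact mul_le_mul_of_nonneg_left hP (abs_nonneg _)
        _ = m0 * |b| := by ring
    have t2 : ‖w‖ ^ b * (‖fderiv ℝ g₀ (((‖w‖ ^ a : ℝ) : ℂ) * w)‖ * ((|a| + 1) * ‖w‖ ^ a))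
        ≤ m1 * (|a| + 1) := by
      have e : ‖w‖ ^ b * (‖fderiv ℝ g₀ (((‖w‖ ^ a : ℝ) : ℂ) * w)‖ * ((|a| + 1) * ‖w‖ ^ a))
          = (‖w‖ ^ b * ‖w‖ ^ a) * (‖fderiv ℝ g₀ (((‖w‖ ^ a : ℝ) : ℂ) * w)‖ * (|a| + 1)) := by
        ring
      rw [e]
      calc (‖w‖ ^ b * ‖w‖ ^ a) * (‖fderiv ℝ g₀ (((‖w‖ ^ a : ℝ) : ℂ) * w)‖ * (|a| + 1))
          ≤ 1 * (m1 * (|a| + 1)) := by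
            refine mul_le_mul hQR ?_ (by positivity) zero_le_one
            exact mul_le_mul_of_nonneg_right hg1 (by positivity)
        _ = m1 * (|a| + 1) := one_mul _
    calc ‖D‖ ≤ _ := hDle
      _ ≤ m0 * |b| + m1 * (|a| + 1) := add_le_add t1 t2
      _ ≤ m0 * |b| + m1 * (|a| + 1) + 1 := by linarith
end
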